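/- For all i, j ∈ ℤ with (i, j) ≠ (0, 0) and every s ∈ I_{i,j}, the second iterate of f satisfies: f(f(s)) = ω^{|i|+|j|+2}·(Δ_{i,j} − s) if j < 0 or (j = 0 and i < 0), and f(f(s)) = ω^{|i|+|j|+2}·(s − Δ_{i,j}) if j > 0 or (j = 0 and i > 0). Moreover, for every s in the interval (β + β², 2β), one has f(f(s)) = ω²·(s − (β + β²)). Thus the piecewise-affine renormalization function r coincides with the second iterate f² of f. -/
import Mathlib


noncomputable section

/-- `β = √2 - 1`. -/
def β : ℝ := Real.sqrt 2 - 1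

/-- `ω = √2 + 1`. -/
def ω : ℝ := Real.sqrt 2 + 1

/-- The break points `Δ_i`. -/
def Δ (i : ℤ) : ℝ :=
  if i < 0 then β ^ i.natAbs
  else if i = 0 then β
  else Real.sqrt 2 - β ^ i.natAbs

/-- The intervals `I_i`. -/
def Iint (i : ℤ) : Set ℝ :=
  if i < 0 then Set.Ioc (Δ (i - 1)) (Δ i)
  else if i = 0 then Set.Ioo β 1
  else Set.Ico (Δ i) (Δ (i + 1))

/-- The defining formula of `f` on the interval `I_i`. -/
def fval (i : ℤ) (s : ℝ) : ℝ :=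
  if i < 0 then ω ^ (i.natAbs + 1) * (Δ i - s)
  else if i = 0 then ω * (s - β)
  else ω ^ (i.natAbs + 1) * (s - Δ i)

/-- `f` is the renormalization map: `f 0 = f √2 = 0` and on each interval `I_i`
    it is given by the corresponding affine formula. These conditions determine
    `f` uniquely on `[0, √2]`. -/
def IsLuroth (f : ℝ → ℝ) : Prop :=
  f 0 = 0 ∧ f (Real.sqrt 2) = 0 ∧ ∀ i : ℤ, ∀ s ∈ Iint i, f s = fval i s

/-- `ℚ(√2)` as a subset of `ℝ`. -/
def QSqrt2 : Set ℝ := {x | ∃ a b : ℚ, x = (a : ℝ) + (b : ℝ) * Real.sqrt 2}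

/-- `ℤ[√2]` as a subset of `ℝ`. -/
def ZSqrt2 : Set ℝ := {x | ∃ m n : ℤ, x = (m : ℝ) + (n : ℝ) * Real.sqrt 2}

/-- `M_d = {s ∈ [0,√2] : d·s ∈ ℤ[√2]}`. -/
def Mset (d : ℤ) : Set ℝ :=
  {s | s ∈ Set.Icc 0 (Real.sqrt 2) ∧ (d : ℝ) * s ∈ ZSqrt2}

/-- Base case of `Δ_{i,j}` (for `i ≤ 0`): the two explicit formulas. -/
def Δ2base (i j : ℤ) : ℝ :=
  if j ≤ 0 then β ^ (i.natAbs + 1) + β ^ (i.natAbs + j.natAbs + 1)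
  else β ^ i.natAbs - β ^ (i.natAbs + j.natAbs + 1)

/-- The break points `Δ_{i,j}`. -/
def Δ2 (i j : ℤ) : ℝ :=
  if 0 < i ∨ (i = 0 ∧ 0 < j) then Real.sqrt 2 - Δ2base (-i) (-j)
  else Δ2base i j

/-- The intervals `I_{i,j}`. -/
def I2 (i j : ℤ) : Set ℝ :=
  if j < 0 then Set.Ioc (Δ2 i (j - 1)) (Δ2 i j)
  else if j = 0 then
    (if i < 0 then Set.Ioo (Δ2 i (-1)) (Δ2 i 0) else Set.Ioo (Δ2 i 0) (Δ2 i 1))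
  else Set.Ico (Δ2 i j) (Δ2 i (j + 1))

/- ### Auxiliary lemmas -/

private lemma sqrt2_sq : Real.sqrt 2 ^ 2 = 2 := Real.sq_sqrt (by norm_num)
private lemma sqrt2_gt : 1 < Real.sqrt 2 := by nlinarith [Real.sqrt_nonneg 2, sqrt2_sq]
private lemma sqrt2_lt : Real.sqrt 2 < 3/2 := by nlinarith [Real.sqrt_nonneg 2, sqrt2_sq]
private lemma β_eq : β = Real.sqrt 2 - 1 := rfl
private lemma ω_eq : ω = Real.sqrt 2 + 1 := rfl
private lemma β_pos : 0 < β := by rw [β_eq]; linarith [sqrt2_gt]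
private lemma β_lt_half : β < 1/2 := by rw [β_eq]; linarith [sqrt2_lt]
private lemma β_lt_one : β < 1 := by linarith [β_lt_half]
private lemma ω_pos : 0 < ω := by rw [ω_eq]; linarith [sqrt2_gt]
private lemma βω : β * ω = 1 := by rw [β_eq, ω_eq]; nlinarith [sqrt2_sq]
private lemma bw_pow (a c : ℕ) : ω ^ a * β ^ (a + c) = β ^ c := by
  rw [pow_add, ← mul_assoc, mul_comm (ω ^ a), ← mul_pow, mul_comm β ω]
  rw [show ω * β = 1 from by rw [mul_comm]; exact βω, one_pow, one_mul]
private lemma wb_pow (a c : ℕ) : ω ^ (a + c) * β ^ a = ω ^ c := by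
  rw [pow_add, mul_comm (ω ^ a), mul_assoc, ← mul_pow, mul_comm ω β, βω, one_pow, mul_one]
private lemma wb_pow' (a b c : ℕ) (h : a = b + c) : ω ^ a * β ^ b = ω ^ c := by
  subst h; exact wb_pow b c
private lemma bw_pow' (a b c : ℕ) (h : b = a + c) : ω ^ a * β ^ b = β ^ c := by
  subst h; exact bw_pow a c
private lemma bb1 : β + β^2 < 1 := by rw [β_eq]; nlinarith [sqrt2_sq, sqrt2_gt]
private lemma ineqA (n : ℕ) : β^(n+1) + β^(n+2) < β^n := by
  nlinarith [mul_lt_mul_of_pos_left bb1 (pow_pos β_pos n),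
    show β^(n+1) = β^n*β from by ring, show β^(n+2) = β^n*β^2 from by ring]
private lemma ineqC (n : ℕ) : 2*β^(n+1) < β^n := by
  nlinarith [mul_lt_mul_of_pos_left β_lt_half (pow_pos β_pos n),
    show β^(n+1) = β^n*β from by ring]
private lemma hws : ω * Real.sqrt 2 = 2 + Real.sqrt 2 := by rw [ω_eq]; linear_combination sqrt2_sq
private lemma bb2 : 2*β + β^2 = 1 := by rw [β_eq]; linear_combination sqrt2_sq

private lemma f_zero {f : ℝ → ℝ} (hf : IsLuroth f) {s : ℝ} (h1 : β < s) (h2 : s < 1) :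
    f s = ω * (s - β) := by
  have h := hf.2.2 0 s (by rw [Iint, if_neg (by omega), if_pos rfl]; exact ⟨h1, h2⟩)
  rw [h, fval, if_neg (by omega), if_pos rfl]

private lemma f_neg {f : ℝ → ℝ} (hf : IsLuroth f) (k : ℕ) (hk : 1 ≤ k) {s : ℝ}
    (h1 : β ^ (k + 1) < s) (h2 : s ≤ β ^ k) : f s = ω ^ (k + 1) * (β ^ k - s) := by
  have hd1 : Δ (-(k : ℤ)) = β ^ k := by
    rw [Δ, if_pos (by omega)]; congr 1; omega
  have hd2 : Δ (-(k : ℤ) - 1) = β ^ (k + 1) := by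
    rw [Δ, if_pos (by omega)]; congr 1; omega
  have hnk : (-(k : ℤ)).natAbs = k := by omega
  have h := hf.2.2 (-(k : ℤ)) s
    (by rw [Iint, if_pos (by omega)]; exact ⟨by rw [hd2]; exact h1, by rw [hd1]; exact h2⟩)
  rw [h, fval, if_pos (by omega), hd1, hnk]

private lemma f_pos {f : ℝ → ℝ} (hf : IsLuroth f) (k : ℕ) (hk : 1 ≤ k) {s : ℝ}
    (h1 : Real.sqrt 2 - β ^ k ≤ s) (h2 : s < Real.sqrt 2 - β ^ (k + 1)) :
    f s = ω ^ (k + 1) * (s - (Real.sqrt 2 - β ^ k)) := by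
  have ha : ((k : ℤ)).natAbs = k := by omega
  have hb : ((k : ℤ) + 1).natAbs = k + 1 := by omega
  have hd1 : Δ ((k : ℤ)) = Real.sqrt 2 - β ^ k := by
    rw [Δ, if_neg (by omega), if_neg (by omega), ha]
  have hd2 : Δ ((k : ℤ) + 1) = Real.sqrt 2 - β ^ (k + 1) := by
    rw [Δ, if_neg (by omega), if_neg (by omega), hb]
  have h := hf.2.2 ((k : ℤ)) s
    (by rw [Iint, if_neg (by omega), if_neg (by omega)];
        exact ⟨by rw [hd1]; exact h1, by rw [hd2]; exact h2⟩)
  rw [h, fval, if_neg (by omega), if_neg (by omega), hd1, ha]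

private lemma Δ2_nn' (i j : ℤ) (hi : i ≤ 0) (hj : j ≤ 0) :
    Δ2 i j = β ^ (i.natAbs + 1) + β ^ (i.natAbs + j.natAbs + 1) := by
  rw [Δ2, if_neg (by omega), Δ2base, if_pos hj]

private lemma Δ2_np' (i j : ℤ) (hi : i < 0) (hj : 0 < j) :
    Δ2 i j = β ^ i.natAbs - β ^ (i.natAbs + j.natAbs + 1) := by
  rw [Δ2, if_neg (by omega), Δ2base, if_neg (by omega)]

private lemma Δ2_pos' (i j : ℤ) (h : 0 < i ∨ (i = 0 ∧ 0 < j)) (hj : 0 ≤ j) :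
    Δ2 i j = Real.sqrt 2 - (β ^ (i.natAbs + 1) + β ^ (i.natAbs + j.natAbs + 1)) := by
  rw [Δ2, if_pos h, Δ2base, if_pos (by omega), Int.natAbs_neg, Int.natAbs_neg]

private lemma Δ2_pn' (i j : ℤ) (hi : 0 < i) (hj : j < 0) :
    Δ2 i j = Real.sqrt 2 - (β ^ i.natAbs - β ^ (i.natAbs + j.natAbs + 1)) := by
  rw [Δ2, if_pos (Or.inl hi), Δ2base, if_neg (by omega), Int.natAbs_neg, Int.natAbs_neg]

set_option maxHeartbeats 2000000 in
/-- the renormalization function `r` coincides with `f ∘ f`: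
for `(i,j) ≠ (0,0)` and `s ∈ I_{i,j}`, the second iterate of `f` is the stated
affine function of `s`, and on `(β + β², 2β)` it equals `ω²(s - (β + β²))`. -/
theorem luroth_second_iterate_renormalization (f : ℝ → ℝ) (hf : IsLuroth f) :
    (∀ i j : ℤ, ¬(i = 0 ∧ j = 0) → ∀ s ∈ I2 i j,
      ((j < 0 ∨ (j = 0 ∧ i < 0)) →
        f (f s) = ω ^ (i.natAbs + j.natAbs + 2) * (Δ2 i j - s)) ∧
      ((0 < j ∨ (j = 0 ∧ 0 < i)) →
        f (f s) = ω ^ (i.natAbs + j.natAbs + 2) * (s - Δ2 i j))) ∧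
    (∀ s ∈ Set.Ioo (β + β ^ 2) (2 * β),
      f (f s) = ω ^ 2 * (s - (β + β ^ 2))) := by
  have hmono : ∀ a b : ℕ, a ≤ b → β ^ b ≤ β ^ a :=
    fun a b h => pow_le_pow_of_le_one β_pos.le β_lt_one.le h
  constructor
  · intro i j hij s hs
    rcases lt_trichotomy j 0 with hj | hj | hj
    · -- j < 0
      refine ⟨fun _ => ?_, fun h => absurd h (by omega)⟩
      rw [I2, if_pos hj] at hs
      obtain ⟨m, hm⟩ : ∃ m : ℕ, j.natAbs = m + 1 := ⟨j.natAbs - 1, by omega⟩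
      have hjm : (j - 1).natAbs = m + 2 := by omega
      rcases lt_trichotomy i 0 with hi | hi | hi
      · -- i < 0, j < 0
        obtain ⟨n, hn⟩ : ∃ n : ℕ, i.natAbs = n + 1 := ⟨i.natAbs - 1, by omega⟩
        have hd1 : Δ2 i (j-1) = β^(n+2) + β^(n+m+4) := by
          rw [Δ2_nn' i (j-1) (by omega) (by omega), hn, hjm]; ring
        have hd2 : Δ2 i j = β^(n+2) + β^(n+m+3) := by
          rw [Δ2_nn' i j (by omega) (by omega), hn, hm]; ring
        rw [hd1, hd2, Set.mem_Ioc] at hs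
        obtain ⟨hs1, hs2⟩ := hs
        have hA : (0:ℝ) < ω^(n+2) := pow_pos ω_pos _
        have e1 : ω^(n+2) * β^(n+1) = ω := by simpa using wb_pow' (n+2) (n+1) 1 (by omega)
        have e2 : ω^(n+2) * β^(n+2) = 1 := by simpa using wb_pow' (n+2) (n+2) 0 (by omega)
        have e3 : ω^(n+2) * β^(n+m+3) = β^(m+1) := bw_pow' _ _ _ (by omega)
        have e4 : ω^(n+2) * β^(n+m+4) = β^(m+2) := bw_pow' _ _ _ (by omega)
        have hfs : f s = ω^(n+2) * (β^(n+1) - s) := by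
          refine f_neg hf (n+1) (by omega) (by linarith [pow_pos β_pos (n+m+4)]) ?_
          linarith [hmono (n+3) (n+m+3) (by omega), ineqA (n+1)]
        have hb1 : Real.sqrt 2 - β^(m+1) ≤ f s := by
          rw [hfs]
          nlinarith [mul_nonneg hA.le (show (0:ℝ) ≤ β^(n+2) + β^(n+m+3) - s by linarith),
            e1, e2, e3, ω_eq]
        have hb2 : f s < Real.sqrt 2 - β^(m+2) := by
          rw [hfs]
          nlinarith [mul_pos hA (show (0:ℝ) < s - (β^(n+2) + β^(n+m+4)) by linarith),
            e1, e2, e4, ω_eq]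
        rw [f_pos hf (m+1) (by omega) hb1 hb2, hfs, hd2, hn, hm]
        linear_combination ω^(m+2)*e1 - ω^(m+2)*e2 - ω^(m+2)*e3 + ω^(m+2)*ω_eq
      · -- i = 0, j < 0
        subst hi
        have hd1 : Δ2 0 (j-1) = β + β^(m+3) := by
          rw [Δ2_nn' 0 (j-1) (by omega) (by omega), Int.natAbs_zero, hjm]; ring
        have hd2 : Δ2 0 j = β + β^(m+2) := by
          rw [Δ2_nn' 0 j (by omega) (by omega), Int.natAbs_zero, hm]; ring
        rw [hd1, hd2, Set.mem_Ioc] at hs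
        obtain ⟨hs1, hs2⟩ := hs
        have e3 : ω * β^(m+2) = β^(m+1) := by simpa using bw_pow' 1 (m+2) (m+1) (by omega)
        have e4 : ω * β^(m+3) = β^(m+2) := by simpa using bw_pow' 1 (m+3) (m+2) (by omega)
        have hfs : f s = ω * (s - β) := by
          refine f_zero hf (by linarith [pow_pos β_pos (m+3)]) ?_
          linarith [hmono 2 (m+2) (by omega), bb1]
        have hb1 : β^(m+2) < f s := by
          rw [hfs]
          nlinarith [mul_pos ω_pos (show (0:ℝ) < s - (β + β^(m+3)) by linarith), e4]
        have hb2 : f s ≤ β^(m+1) := by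
          rw [hfs]
          nlinarith [mul_nonneg ω_pos.le (show (0:ℝ) ≤ β + β^(m+2) - s by linarith), e3]
        rw [f_neg hf (m+1) (by omega) hb1 hb2, hfs, hd2, Int.natAbs_zero, hm]
        linear_combination wb_pow' (m+2) (m+1) 1 (by omega) - wb_pow' (m+3) (m+2) 1 (by omega)
      · -- i > 0, j < 0
        obtain ⟨n, hn⟩ : ∃ n : ℕ, i.natAbs = n + 1 := ⟨i.natAbs - 1, by omega⟩
        have hd1 : Δ2 i (j-1) = Real.sqrt 2 - (β^(n+1) - β^(n+m+4)) := by
          rw [Δ2_pn' i (j-1) hi (by omega), hn, hjm]; ring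
        have hd2 : Δ2 i j = Real.sqrt 2 - (β^(n+1) - β^(n+m+3)) := by
          rw [Δ2_pn' i j hi hj, hn, hm]; ring
        rw [hd1, hd2, Set.mem_Ioc] at hs
        obtain ⟨hs1, hs2⟩ := hs
        have hA : (0:ℝ) < ω^(n+2) := pow_pos ω_pos _
        have e3 : ω^(n+2) * β^(n+m+3) = β^(m+1) := bw_pow' _ _ _ (by omega)
        have e4 : ω^(n+2) * β^(n+m+4) = β^(m+2) := bw_pow' _ _ _ (by omega)
        have hfs : f s = ω^(n+2) * (s - (Real.sqrt 2 - β^(n+1))) := by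
          refine f_pos hf (n+1) (by omega) (by linarith [pow_pos β_pos (n+m+4)]) ?_
          linarith [hmono (n+3) (n+m+3) (by omega), ineqA (n+1)]
        have hb1 : β^(m+2) < f s := by
          rw [hfs]
          nlinarith [mul_pos hA
            (show (0:ℝ) < s - (Real.sqrt 2 - (β^(n+1) - β^(n+m+4))) by linarith), e4]
        have hb2 : f s ≤ β^(m+1) := by
          rw [hfs]
          nlinarith [mul_nonneg hA.le
            (show (0:ℝ) ≤ Real.sqrt 2 - (β^(n+1) - β^(n+m+3)) - s by linarith), e3]
        rw [f_neg hf (m+1) (by omega) hb1 hb2, hfs, hd2, hn, hm]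
        linear_combination (-(ω^(m+2)))*e3
    · -- j = 0
      subst hj
      rcases lt_trichotomy i 0 with hi | hi | hi
      · -- i < 0, j = 0
        refine ⟨fun _ => ?_, fun h => absurd h (by omega)⟩
        rw [I2, if_neg (by omega), if_pos rfl, if_pos hi, Set.mem_Ioo] at hs
        obtain ⟨hs1, hs2⟩ := hs
        obtain ⟨n, hn⟩ : ∃ n : ℕ, i.natAbs = n + 1 := ⟨i.natAbs - 1, by omega⟩
        have hd1 : Δ2 i (-1) = β^(n+2) + β^(n+3) := by
          rw [Δ2_nn' i (-1) (by omega) (by omega), show ((-1:ℤ)).natAbs = 1 from rfl, hn]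
          try ring
        have hd2 : Δ2 i 0 = β^(n+2) + β^(n+2) := by
          rw [Δ2_nn' i 0 (by omega) le_rfl, Int.natAbs_zero, hn]
          try ring
        rw [hd1] at hs1
        rw [hd2] at hs2
        have hA : (0:ℝ) < ω^(n+2) := pow_pos ω_pos _
        have e1 : ω^(n+2) * β^(n+1) = ω := by simpa using wb_pow' (n+2) (n+1) 1 (by omega)
        have e2 : ω^(n+2) * β^(n+2) = 1 := by simpa using wb_pow' (n+2) (n+2) 0 (by omega)
        have e3 : ω^(n+2) * β^(n+3) = β := by simpa using bw_pow' (n+2) (n+3) 1 (by omega)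
        have hfs : f s = ω^(n+2) * (β^(n+1) - s) := by
          refine f_neg hf (n+1) (by omega) (by linarith [pow_pos β_pos (n+3)]) ?_
          linarith [ineqC (n+1)]
        have hb1 : β < f s := by
          rw [hfs]
          nlinarith [mul_pos hA (show (0:ℝ) < β^(n+2) + β^(n+2) - s by linarith),
            e1, e2, ω_eq, β_eq]
        have hb2 : f s < 1 := by
          rw [hfs]
          nlinarith [mul_pos hA (show (0:ℝ) < s - (β^(n+2) + β^(n+3)) by linarith),
            e1, e2, e3, ω_eq, β_eq]
        rw [f_zero hf hb1 hb2, hfs, hd2, hn, Int.natAbs_zero]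
        linear_combination wb_pow' (n+3) (n+1) 2 (by omega) - 2*(wb_pow' (n+3) (n+2) 1 (by omega))
          - βω + (ω + Real.sqrt 2 - 1)*ω_eq + sqrt2_sq
      · exact absurd ⟨hi, rfl⟩ hij
      · -- i > 0, j = 0
        refine ⟨fun h => absurd h (by omega), fun _ => ?_⟩
        rw [I2, if_neg (by omega), if_pos rfl, if_neg (by omega), Set.mem_Ioo] at hs
        obtain ⟨hs1, hs2⟩ := hs
        obtain ⟨n, hn⟩ : ∃ n : ℕ, i.natAbs = n + 1 := ⟨i.natAbs - 1, by omega⟩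
        have hd1 : Δ2 i 0 = Real.sqrt 2 - (β^(n+2) + β^(n+2)) := by
          rw [Δ2_pos' i 0 (Or.inl hi) le_rfl, Int.natAbs_zero, hn]
          try ring
        have hd2 : Δ2 i 1 = Real.sqrt 2 - (β^(n+2) + β^(n+3)) := by
          rw [Δ2_pos' i 1 (Or.inl hi) (by omega), show ((1:ℤ)).natAbs = 1 from rfl, hn]
          try ring
        rw [hd1] at hs1
        rw [hd2] at hs2
        have hA : (0:ℝ) < ω^(n+2) := pow_pos ω_pos _
        have e1 : ω^(n+2) * β^(n+1) = ω := by simpa using wb_pow' (n+2) (n+1) 1 (by omega)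
        have e2 : ω^(n+2) * β^(n+2) = 1 := by simpa using wb_pow' (n+2) (n+2) 0 (by omega)
        have e3 : ω^(n+2) * β^(n+3) = β := by simpa using bw_pow' (n+2) (n+3) 1 (by omega)
        have hfs : f s = ω^(n+2) * (s - (Real.sqrt 2 - β^(n+1))) := by
          refine f_pos hf (n+1) (by omega) (by linarith [ineqC (n+1)]) ?_
          linarith [pow_pos β_pos (n+3)]
        have hb1 : β < f s := by
          rw [hfs]
          nlinarith [mul_pos hA
            (show (0:ℝ) < s - (Real.sqrt 2 - (β^(n+2) + β^(n+2))) by linarith),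
            e1, e2, ω_eq, β_eq]
        have hb2 : f s < 1 := by
          rw [hfs]
          nlinarith [mul_pos hA
            (show (0:ℝ) < Real.sqrt 2 - (β^(n+2) + β^(n+3)) - s by linarith),
            e1, e2, e3, ω_eq, β_eq]
        rw [f_zero hf hb1 hb2, hfs, hd1, hn, Int.natAbs_zero]
        linear_combination wb_pow' (n+3) (n+1) 2 (by omega) - 2*(wb_pow' (n+3) (n+2) 1 (by omega))
          - βω + (ω + Real.sqrt 2 - 1)*ω_eq + sqrt2_sq
    · -- j > 0
      refine ⟨fun h => absurd h (by omega), fun _ => ?_⟩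
      rw [I2, if_neg (by omega), if_neg (by omega), Set.mem_Ico] at hs
      obtain ⟨hs1, hs2⟩ := hs
      obtain ⟨m, hm⟩ : ∃ m : ℕ, j.natAbs = m + 1 := ⟨j.natAbs - 1, by omega⟩
      have hjp : (j + 1).natAbs = m + 2 := by omega
      rcases lt_trichotomy i 0 with hi | hi | hi
      · -- i < 0, j > 0
        obtain ⟨n, hn⟩ : ∃ n : ℕ, i.natAbs = n + 1 := ⟨i.natAbs - 1, by omega⟩
        have hd1 : Δ2 i j = β^(n+1) - β^(n+m+3) := by
          rw [Δ2_np' i j hi hj, hn, hm]; ring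
        have hd2 : Δ2 i (j+1) = β^(n+1) - β^(n+m+4) := by
          rw [Δ2_np' i (j+1) hi (by omega), hn, hjp]; ring
        rw [hd1] at hs1
        rw [hd2] at hs2
        have hA : (0:ℝ) < ω^(n+2) := pow_pos ω_pos _
        have e3 : ω^(n+2) * β^(n+m+3) = β^(m+1) := bw_pow' _ _ _ (by omega)
        have e4 : ω^(n+2) * β^(n+m+4) = β^(m+2) := bw_pow' _ _ _ (by omega)
        have hfs : f s = ω^(n+2) * (β^(n+1) - s) := by
          refine f_neg hf (n+1) (by omega) ?_ (by linarith [pow_pos β_pos (n+m+4)])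
          linarith [hmono (n+3) (n+m+3) (by omega), ineqA (n+1)]
        have hb1 : β^(m+2) < f s := by
          rw [hfs]
          nlinarith [mul_pos hA (show (0:ℝ) < (β^(n+1) - β^(n+m+4)) - s by linarith), e4]
        have hb2 : f s ≤ β^(m+1) := by
          rw [hfs]
          nlinarith [mul_nonneg hA.le (show (0:ℝ) ≤ s - (β^(n+1) - β^(n+m+3)) by linarith), e3]
        rw [f_neg hf (m+1) (by omega) hb1 hb2, hfs, hd1, hn, hm]
        linear_combination (-(ω^(m+2)))*e3
      · -- i = 0, j > 0
        subst hi
        have hd1 : Δ2 0 j = Real.sqrt 2 - (β + β^(m+2)) := by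
          rw [Δ2_pos' 0 j (Or.inr ⟨rfl, hj⟩) hj.le, Int.natAbs_zero, hm]; ring
        have hd2 : Δ2 0 (j+1) = Real.sqrt 2 - (β + β^(m+3)) := by
          rw [Δ2_pos' 0 (j+1) (Or.inr ⟨rfl, by omega⟩) (by omega), Int.natAbs_zero, hjp]; ring
        rw [hd1] at hs1
        rw [hd2] at hs2
        have e3 : ω * β^(m+2) = β^(m+1) := by simpa using bw_pow' 1 (m+2) (m+1) (by omega)
        have e4 : ω * β^(m+3) = β^(m+2) := by simpa using bw_pow' 1 (m+3) (m+2) (by omega)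
        have hfs : f s = ω * (s - β) := by
          refine f_zero hf ?_ ?_
          · linarith [hmono 2 (m+2) (by omega), bb2, sqrt2_gt]
          · have : Real.sqrt 2 - β = 1 := by rw [β_eq]; ring
            linarith [pow_pos β_pos (m+3)]
        have hb1 : Real.sqrt 2 - β^(m+1) ≤ f s := by
          rw [hfs]
          nlinarith [mul_nonneg ω_pos.le
            (show (0:ℝ) ≤ s - (Real.sqrt 2 - (β + β^(m+2))) by linarith), e3, βω, hws]
        have hb2 : f s < Real.sqrt 2 - β^(m+2) := by
          rw [hfs]
          nlinarith [mul_pos ω_pos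
            (show (0:ℝ) < Real.sqrt 2 - (β + β^(m+3)) - s by linarith), e4, βω, hws]
        rw [f_pos hf (m+1) (by omega) hb1 hb2, hfs, hd1, Int.natAbs_zero, hm]
        linear_combination wb_pow' (m+2) (m+1) 1 (by omega) - wb_pow' (m+3) (m+2) 1 (by omega)
          - 2*(wb_pow' (m+3) 1 (m+2) (by omega)) + ω^(m+2)*hws
      · -- i > 0, j > 0
        obtain ⟨n, hn⟩ : ∃ n : ℕ, i.natAbs = n + 1 := ⟨i.natAbs - 1, by omega⟩
        have hd1 : Δ2 i j = Real.sqrt 2 - (β^(n+2) + β^(n+m+3)) := by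
          rw [Δ2_pos' i j (Or.inl hi) hj.le, hn, hm]; ring
        have hd2 : Δ2 i (j+1) = Real.sqrt 2 - (β^(n+2) + β^(n+m+4)) := by
          rw [Δ2_pos' i (j+1) (Or.inl hi) (by omega), hn, hjp]; ring
        rw [hd1] at hs1
        rw [hd2] at hs2
        have hA : (0:ℝ) < ω^(n+2) := pow_pos ω_pos _
        have e1 : ω^(n+2) * β^(n+1) = ω := by simpa using wb_pow' (n+2) (n+1) 1 (by omega)
        have e2 : ω^(n+2) * β^(n+2) = 1 := by simpa using wb_pow' (n+2) (n+2) 0 (by omega)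
        have e3 : ω^(n+2) * β^(n+m+3) = β^(m+1) := bw_pow' _ _ _ (by omega)
        have e4 : ω^(n+2) * β^(n+m+4) = β^(m+2) := bw_pow' _ _ _ (by omega)
        have hfs : f s = ω^(n+2) * (s - (Real.sqrt 2 - β^(n+1))) := by
          refine f_pos hf (n+1) (by omega) ?_ (by linarith [pow_pos β_pos (n+m+4)])
          linarith [hmono (n+3) (n+m+3) (by omega), ineqA (n+1)]
        have hb1 : Real.sqrt 2 - β^(m+1) ≤ f s := by
          rw [hfs]
          nlinarith [mul_nonneg hA.le
            (show (0:ℝ) ≤ s - (Real.sqrt 2 - (β^(n+2) + β^(n+m+3))) by linarith),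
            e1, e2, e3, ω_eq]
        have hb2 : f s < Real.sqrt 2 - β^(m+2) := by
          rw [hfs]
          nlinarith [mul_pos hA
            (show (0:ℝ) < Real.sqrt 2 - (β^(n+2) + β^(n+m+4)) - s by linarith),
            e1, e2, e4, ω_eq]
        rw [f_pos hf (m+1) (by omega) hb1 hb2, hfs, hd1, hn, hm]
        linear_combination ω^(m+2)*e1 - ω^(m+2)*e2 - ω^(m+2)*e3 + ω^(m+2)*ω_eq
  · -- the interval (β + β², 2β)
    intro s hs
    rw [Set.mem_Ioo] at hs
    obtain ⟨hs1, hs2⟩ := hs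
    have hfs : f s = ω * (s - β) := by
      refine f_zero hf (by nlinarith [pow_pos β_pos 2]) (by linarith [β_lt_half])
    have hwb2 : ω * β^2 = β := by linear_combination β*βω
    have hb1 : β < f s := by
      rw [hfs]
      nlinarith [mul_pos ω_pos (show (0:ℝ) < s - (β + β^2) by linarith), hwb2]
    have hb2 : f s < 1 := by
      rw [hfs]
      nlinarith [mul_pos ω_pos (show (0:ℝ) < 2*β - s by linarith), βω]
    rw [f_zero hf hb1 hb2, hfs]
    linear_combination (β*ω)*βω
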